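/- (Full probabilistic detection guarantee, part (ii) of the main theorem.) There exists an absolute constant C > 0 with the following property. Let n, r ≥ 1, R ∈ ℝ^{r×n}, x ∈ ℝ^n, Δ ≥ 0, and ε, δ ∈ (0,1). Suppose that for every c ∈ ℝ^r, at least εn coordinates are violated: |{i ∈ {1,…,n} : |x_i − (cR)_i| > Δ}| ≥ εn. Let d := (r+2)·log(r+2). If i₁, …, i_s are sampled independently and uniformly at random from {1,…,n} with s ≥ C·((1/ε)·log(1/δ) + (d/ε)·log(d/ε)), and S = {i₁,…,i_s}, then with probability at least 1 − δ the sampled system on S is infeasible, i.e., the randomized test detects that x lies outside the subspace. -/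

import Mathlib

open scoped Classical

noncomputable section RDGaux

open Finset

/-- min-norm point predicate. -/
private def IsMNP {r : ℕ} (F : Set (EuclideanSpace ℝ (Fin r))) (p : EuclideanSpace ℝ (Fin r)) :
    Prop :=
  p ∈ F ∧ ∀ q ∈ F, ‖p‖ ≤ ‖q‖

private noncomputable def mnp {r : ℕ} (F : Set (EuclideanSpace ℝ (Fin r))) :
    EuclideanSpace ℝ (Fin r) :=
  if h : ∃ p, IsMNP F p then h.choose else 0

private lemma mnp_spec {r : ℕ} {F : Set (EuclideanSpace ℝ (Fin r))} (h : ∃ p, IsMNP F p) :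
    IsMNP F (mnp F) := by
  rw [mnp, dif_pos h]; exact h.choose_spec

private lemma exists_mnp {r : ℕ} {F : Set (EuclideanSpace ℝ (Fin r))} (hne : F.Nonempty)
    (hcl : IsClosed F) : ∃ p, IsMNP F p := by
  obtain ⟨z, hz⟩ := hne
  have hK : IsCompact (F ∩ Metric.closedBall 0 ‖z‖) :=
    (isCompact_closedBall 0 ‖z‖).inter_left hcl
  have hKne : (F ∩ Metric.closedBall 0 ‖z‖).Nonempty :=
    ⟨z, hz, by simp [Metric.mem_closedBall]⟩
  obtain ⟨p, hpK, hpmin⟩ := hK.exists_isMinOn hKne (continuous_norm.continuousOn)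
  refine ⟨p, hpK.1, fun q hq => ?_⟩
  by_cases hq' : ‖q‖ ≤ ‖z‖
  · exact hpmin ⟨hq, by simpa [Metric.mem_closedBall] using hq'⟩
  · have : ‖p‖ ≤ ‖z‖ := hpmin ⟨hz, by simp⟩
    linarith

private lemma mnp_unique {r : ℕ} {F : Set (EuclideanSpace ℝ (Fin r))} (hconv : Convex ℝ F)
    {p q : EuclideanSpace ℝ (Fin r)} (hp : IsMNP F p) (hq : IsMNP F q) : p = q := by
  have h1 : ‖p‖ = ‖q‖ := le_antisymm (hp.2 q hq.1) (hq.2 p hp.1)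
  have hm : (1/2 : ℝ) • p + (1/2 : ℝ) • q ∈ F :=
    hconv hp.1 hq.1 (by norm_num) (by norm_num) (by norm_num)
  have h2 : ‖p‖ ≤ ‖(1/2 : ℝ) • p + (1/2 : ℝ) • q‖ := hp.2 _ hm
  have hpar : ‖p + q‖ ^ 2 + ‖p - q‖ ^ 2 = 2 * (‖p‖ * ‖p‖) + 2 * (‖q‖ * ‖q‖) := by
    have := parallelogram_law_with_norm ℝ p q
    nlinarith [this]
  have h3 : ‖(1/2 : ℝ) • p + (1/2 : ℝ) • q‖ = (1/2 : ℝ) * ‖p + q‖ := by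
    rw [← smul_add, norm_smul]; simp
  have h4 : ‖p - q‖ ^ 2 ≤ 0 := by
    have hpq : ‖p‖ ≤ 1/2 * ‖p + q‖ := by rw [← h3]; exact h2
    nlinarith [norm_nonneg (p + q), norm_nonneg p]
  have : ‖p - q‖ = 0 := le_antisymm (by nlinarith [norm_nonneg (p - q)]) (norm_nonneg _)
  exact sub_eq_zero.mp (norm_eq_zero.mp this)

private lemma mnp_eq {r : ℕ} {F : Set (EuclideanSpace ℝ (Fin r))} (hconv : Convex ℝ F)
    {p : EuclideanSpace ℝ (Fin r)} (hp : IsMNP F p) : mnp F = p :=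
  mnp_unique hconv (mnp_spec ⟨p, hp⟩) hp

/-- closed halfspace -/
private def HSp {r : ℕ} (g : EuclideanSpace ℝ (Fin r)) (c : ℝ) :
    Set (EuclideanSpace ℝ (Fin r)) :=
  {v | inner ℝ g v ≤ c}

private lemma HSp_convex {r : ℕ} (g : EuclideanSpace ℝ (Fin r)) (c : ℝ) :
    Convex ℝ (HSp g c) := by
  have : HSp g c = {v : EuclideanSpace ℝ (Fin r) | (innerSL ℝ g) v ≤ c} := rfl
  rw [this]
  exact convex_halfSpace_le (innerSL ℝ g).toLinearMap.isLinear c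

private lemma HSp_closed {r : ℕ} (g : EuclideanSpace ℝ (Fin r)) (c : ℝ) : IsClosed (HSp g c) :=
  isClosed_le (continuous_const.inner continuous_id) continuous_const

private lemma biInter_HSp_convex {r : ℕ} {ι : Type*} (g : ι → EuclideanSpace ℝ (Fin r))
    (c : ι → ℝ) (B : Finset ι) : Convex ℝ (⋂ i ∈ B, HSp (g i) (c i)) :=
  convex_iInter fun _ => convex_iInter fun _ => HSp_convex _ _

private lemma biInter_HSp_closed {r : ℕ} {ι : Type*} (g : ι → EuclideanSpace ℝ (Fin r))
    (c : ι → ℝ) (B : Finset ι) : IsClosed (⋂ i ∈ B, HSp (g i) (c i)) :=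
  isClosed_biInter fun _ _ => HSp_closed _ _

/-- Every nonempty finite intersection of halfspaces in `ℝ^r` has the same min-norm point as
a subfamily of at most `r+1` halfspaces. -/
private lemma basis_exists {r : ℕ} {ι : Type*} (g : ι → EuclideanSpace ℝ (Fin r)) (c : ι → ℝ)
    (A : Finset ι) (hne : (⋂ i ∈ A, HSp (g i) (c i)).Nonempty) :
    ∃ B ⊆ A, B.card ≤ r + 1 ∧
      mnp (⋂ i ∈ B, HSp (g i) (c i)) = mnp (⋂ i ∈ A, HSp (g i) (c i)) := by
  classical
  induction A using Finset.strongInduction with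
  | _ A ih =>
  set S : Finset ι → Set (EuclideanSpace ℝ (Fin r)) := fun B => ⋂ i ∈ B, HSp (g i) (c i) with hS
  set p : EuclideanSpace ℝ (Fin r) := mnp (S A) with hpdef
  have hp : IsMNP (S A) p := mnp_spec (exists_mnp hne (biInter_HSp_closed g c A))
  by_cases hc : ∃ j ∈ A, mnp (S (A.erase j)) = p
  · obtain ⟨j, hjA, heq⟩ := hc
    have hsub : S A ⊆ S (A.erase j) :=
      Set.biInter_mono (fun i hi => Finset.mem_of_mem_erase hi) (fun _ _ => le_rfl)
    obtain ⟨B, hB1, hB2, hB3⟩ := ih (A.erase j) (Finset.erase_ssubset hjA) (hne.mono hsub)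
    exact ⟨B, hB1.trans (Finset.erase_subset j A), hB2, by rw [hB3, heq]⟩
  · push_neg at hc
    by_cases hcard : A.card ≤ r + 1
    · exact ⟨A, Finset.Subset.refl A, hcard, rfl⟩
    · exfalso
      have hAcard : r + 2 ≤ A.card := by omega
      have hpj : ∀ j ∈ A, ∃ q, IsMNP (S (A.erase j)) q ∧ ‖q‖ < ‖p‖ := by
        intro j hj
        have hsub : S A ⊆ S (A.erase j) :=
          Set.biInter_mono (fun i hi => Finset.mem_of_mem_erase hi) (fun _ _ => le_rfl)
        obtain ⟨q, hq⟩ := exists_mnp (hne.mono hsub) (biInter_HSp_closed g c _)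
        refine ⟨q, hq, ?_⟩
        have hle : ‖q‖ ≤ ‖p‖ := hq.2 p (hsub hp.1)
        rcases lt_or_eq_of_le hle with h | h
        · exact h
        · exfalso
          have : IsMNP (S (A.erase j)) p := ⟨hsub hp.1, fun w hw => h ▸ hq.2 w hw⟩
          exact hc j hj (mnp_eq (biInter_HSp_convex g c _) this)
      have hhelly := Convex.helly_theorem' (𝕜 := ℝ) (s := A)
        (F := fun i => HSp (g i) (c i) ∩ Metric.ball 0 ‖p‖)
        (fun i _ => (HSp_convex _ _).inter (convex_ball 0 _)) ?_
      · obtain ⟨q, hq⟩ := hhelly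
        obtain ⟨i0, hi0⟩ := Finset.card_pos.mp (by omega : 0 < A.card)
        have hq1 : q ∈ S A := by
          refine Set.mem_biInter fun i hi => ?_
          exact (Set.mem_iInter₂.mp hq i hi).1
        have hq2 : ‖q‖ < ‖p‖ := by
          have := (Set.mem_iInter₂.mp hq i0 hi0).2
          simpa [Metric.mem_ball] using this
        exact absurd (hp.2 q hq1) (not_le.mpr hq2)
      · intro I hIA hIcard
        rw [finrank_euclideanSpace_fin] at hIcard
        have : ∃ j ∈ A, j ∉ I := by
          by_contra hcon
          push_neg at hcon
          have : A ⊆ I := fun j hj => hcon j hj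
          have := Finset.card_le_card this
          omega
        obtain ⟨j, hjA, hjI⟩ := this
        obtain ⟨q, hq, hqn⟩ := hpj j hjA
        refine ⟨q, Set.mem_biInter fun i hi => ?_⟩
        have hiA : i ∈ A.erase j := Finset.mem_erase.mpr ⟨fun h => hjI (h ▸ hi), hIA hi⟩
        exact ⟨Set.mem_iInter₂.mp hq.1 i hiA, by simpa [Metric.mem_ball] using hqn⟩

/-- counting functions with restricted off-`T` values -/
private lemma count_restrict {n s : ℕ} (hn : 1 ≤ n) (T : Finset (Fin s))
    (G : (Fin s → Fin n) → Finset (Fin n))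
    (hdep : ∀ ω ω' : Fin s → Fin n, (∀ j ∈ T, ω j = ω' j) → G ω = G ω')
    (M : ℝ) (hG : ∀ ω, ((G ω).card : ℝ) ≤ M) :
    (((Finset.univ.filter (fun ω : Fin s → Fin n => ∀ j ∉ T, ω j ∈ G ω)).card : ℝ)) ≤
      (n : ℝ) ^ T.card * M ^ (s - T.card) := by
  set ext : (↥T → Fin n) → (Fin s → Fin n) :=
    fun f j => if h : j ∈ T then f ⟨j, h⟩ else ⟨0, hn⟩ with hext
  have hsub : (Finset.univ.filter (fun ω : Fin s → Fin n => ∀ j ∉ T, ω j ∈ G ω)) ⊆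
      (Finset.univ : Finset (↥T → Fin n)).biUnion
        (fun f => Finset.univ.filter
          (fun ω : Fin s → Fin n => (∀ j ∉ T, ω j ∈ G ω) ∧ ∀ j : ↥T, ω j = f j)) := by
    intro ω hω
    rw [Finset.mem_filter] at hω
    refine Finset.mem_biUnion.mpr ⟨fun j => ω j, Finset.mem_univ _, ?_⟩
    exact Finset.mem_filter.mpr ⟨Finset.mem_univ _, hω.2, fun j => rfl⟩
  have hclass : ∀ f : ↥T → Fin n,
      ((Finset.univ.filter
        (fun ω : Fin s → Fin n => (∀ j ∉ T, ω j ∈ G ω) ∧ ∀ j : ↥T, ω j = f j)).card) ≤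
      (G (ext f)).card ^ (s - T.card) := by
    intro f
    have hGf : ∀ ω : Fin s → Fin n, (∀ j : ↥T, ω j = f j) → G ω = G (ext f) := by
      intro ω hωf
      refine hdep ω (ext f) fun j hj => ?_
      rw [hext]; simp only [dif_pos hj]; exact hωf ⟨j, hj⟩
    have hcard2 : (Fintype.piFinset (fun _ : {j : Fin s // j ∉ T} => G (ext f))).card =
        (G (ext f)).card ^ (s - T.card) := by
      rw [Fintype.card_piFinset, Finset.prod_const, Finset.card_univ]
      congr 1
      rw [Fintype.card_subtype_compl, Fintype.card_fin]
      congr 1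
      exact Fintype.card_coe T
    rw [← hcard2]
    apply Finset.card_le_card_of_injOn
      (f := fun (ω : Fin s → Fin n) (j : {j : Fin s // j ∉ T}) => ω j.1)
    · intro ω hω
      rw [Finset.mem_coe, Finset.mem_filter] at hω
      rw [Finset.mem_coe, Fintype.mem_piFinset]
      intro j
      rw [← hGf ω hω.2.2]
      exact hω.2.1 j.1 j.2
    · intro ω hω ω' hω' hee
      rw [Finset.mem_coe, Finset.mem_filter] at hω hω'
      funext j
      by_cases hj : j ∈ T
      · rw [hω.2.2 ⟨j, hj⟩, hω'.2.2 ⟨j, hj⟩]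
      · exact congrFun hee ⟨j, hj⟩
  calc (((Finset.univ.filter (fun ω : Fin s → Fin n => ∀ j ∉ T, ω j ∈ G ω)).card : ℝ))
      ≤ (((Finset.univ : Finset (↥T → Fin n)).biUnion
        (fun f => Finset.univ.filter
          (fun ω : Fin s → Fin n => (∀ j ∉ T, ω j ∈ G ω) ∧ ∀ j : ↥T, ω j = f j))).card : ℝ) := by
        exact_mod_cast Nat.cast_le.mpr (Finset.card_le_card hsub)
    _ ≤ ∑ f : ↥T → Fin n, ((Finset.univ.filter
          (fun ω : Fin s → Fin n => (∀ j ∉ T, ω j ∈ G ω) ∧ ∀ j : ↥T, ω j = f j)).card : ℝ) := by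
        exact_mod_cast Nat.cast_le.mpr (Finset.card_biUnion_le)
    _ ≤ ∑ _f : ↥T → Fin n, M ^ (s - T.card) := by
        refine Finset.sum_le_sum fun f _ => ?_
        calc ((Finset.univ.filter
            (fun ω : Fin s → Fin n => (∀ j ∉ T, ω j ∈ G ω) ∧ ∀ j : ↥T, ω j = f j)).card : ℝ)
            ≤ ((G (ext f)).card : ℝ) ^ (s - T.card) := by exact_mod_cast hclass f
          _ ≤ M ^ (s - T.card) := pow_le_pow_left₀ (by positivity) (hG _) _
    _ = (n : ℝ) ^ T.card * M ^ (s - T.card) := by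
        rw [Finset.sum_const, Finset.card_univ, Fintype.card_fun, Fintype.card_coe,
          Fintype.card_fin, nsmul_eq_mul]
        push_cast
        ring

private lemma loglem {A s : ℝ} (hA : 3 ≤ A) (hs : 6 * A * Real.log A ≤ s) :
    Real.log s ≤ s / A := by
  have hA0 : 0 < A := by linarith
  have hlogA : 0 < Real.log A := Real.log_pos (by linarith)
  have hs0 : 0 < s := lt_of_lt_of_le (by positivity) hs
  have hA2 : (0:ℝ) < A ^ 2 := by positivity
  have key : Real.log (s / A ^ 2) ≤ s / A ^ 2 - 1 :=
    Real.log_le_sub_one_of_pos (by positivity)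
  have hsplit : Real.log s = Real.log (s / A ^ 2) + 2 * Real.log A := by
    rw [Real.log_div hs0.ne' hA2.ne', Real.log_pow]
    push_cast; ring
  have h1 : s / A ^ 2 ≤ s / (3 * A) := by
    apply div_le_div_of_nonneg_left hs0.le (by positivity)
    nlinarith
  have h2 : Real.log A ≤ s / (6 * A) := by
    rw [le_div_iff₀ (by positivity)]
    nlinarith
  rw [hsplit]
  have : Real.log (s / A ^ 2) ≤ s / (3 * A) := by linarith
  calc Real.log (s / A ^ 2) + 2 * Real.log A ≤ s / (3 * A) + 2 * (s / (6 * A)) := by linarith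
    _ = s / A * (2/3) := by field_simp; ring
    _ ≤ s / A := by
      have : 0 ≤ s / A := by positivity
      linarith



set_option maxHeartbeats 1000000 in
private lemma final_arith (r s : ℕ) (hr : 1 ≤ r) {ε δ : ℝ} (hε : ε ∈ Set.Ioo (0:ℝ) 1)
    (hδ : δ ∈ Set.Ioo (0:ℝ) 1)
    (hs : 200 * ((1/ε) * Real.log (1/δ) +
        (((r : ℝ) + 2) * Real.log ((r : ℝ) + 2) / ε) *
          Real.log (((r : ℝ) + 2) * Real.log ((r : ℝ) + 2) / ε)) ≤ (s : ℝ)) :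
    r + 1 ≤ s ∧ ((r:ℝ)+2) * (2*(s:ℝ))^(r+1) * (1-ε)^(s-(r+1)) ≤ δ := by
  obtain ⟨hε0, hε1⟩ := hε
  obtain ⟨hδ0, hδ1⟩ := hδ
  set ρ : ℝ := (r : ℝ) with hρdef
  have hρ : 1 ≤ ρ := Nat.one_le_cast.mpr hr
  set u : ℝ := 1/ε with hudef
  have hu1 : 1 ≤ u := by rw [hudef, le_div_iff₀ hε0]; linarith
  have huε : u * ε = 1 := by rw [hudef]; field_simp
  have hu0 : 0 < u := by linarith
  have e3 : Real.exp 1 < 3 := by have := Real.exp_one_lt_d9; linarith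
  have log3 : 1 < Real.log 3 := (Real.lt_log_iff_exp_lt (by norm_num)).mpr (by linarith)
  have hlogr2 : 1 < Real.log (ρ + 2) :=
    lt_of_lt_of_le log3 (Real.log_le_log (by norm_num) (by linarith))
  set d : ℝ := (ρ + 2) * Real.log (ρ + 2) with hddef
  have hd0 : 0 < d := by nlinarith
  have hdr2 : ρ + 2 ≤ d := by nlinarith
  have hd3 : 3 ≤ d := by linarith
  have hdu : d ≤ d * u := by nlinarith
  have hdε : d / ε = d * u := by rw [hudef, mul_one_div]
  have hlogdu : 1 < Real.log (d * u) :=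
    lt_of_lt_of_le log3 (Real.log_le_log (by norm_num) (by linarith))
  set T2 : ℝ := (d * u) * Real.log (d * u) with hT2def
  have hT2_3 : 3 ≤ T2 := by nlinarith
  have hT2d : d ≤ T2 := by nlinarith
  set T1 : ℝ := u * Real.log (1/δ) with hT1def
  have hlogδ : 0 < Real.log (1/δ) := Real.log_pos ((one_lt_div hδ0).mpr hδ1)
  have hT1_0 : 0 < T1 := by positivity
  have hs' : 200 * (T1 + T2) ≤ (s:ℝ) := by
    rw [hT1def, hT2def]
    calc 200 * (u * Real.log (1/δ) + d * u * Real.log (d * u))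
        = 200 * ((1/ε) * Real.log (1/δ) + (d / ε) * Real.log (d / ε)) := by
          rw [hdε, hudef]
      _ ≤ (s:ℝ) := hs
  have hsT1 : 200 * T1 ≤ (s:ℝ) := by linarith
  have hsT2 : 200 * T2 ≤ (s:ℝ) := by linarith
  have hs600 : (600:ℝ) ≤ s := by linarith
  have hs0 : (0:ℝ) < s := by linarith
  have hsr2 : 200 * (ρ + 2) ≤ (s:ℝ) := by linarith
  have hrs : (r + 1 : ℕ) ≤ s := by
    have : (r:ℝ) + 1 ≤ (s:ℝ) := by linarith
    exact_mod_cast this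
  refine ⟨hrs, ?_⟩
  -- the log-bound on s
  set A : ℝ := 8 * (ρ + 2) * u with hAdef
  have hA3 : 3 ≤ A := by nlinarith
  have hA0 : 0 < A := by linarith
  have log8 : Real.log 8 < 3 := by
    rw [Real.log_lt_iff_lt_exp (by norm_num)]
    have h1 : (2.7182818283:ℝ) < Real.exp 1 := Real.exp_one_gt_d9
    have : ((2.7182818283:ℝ))^(3:ℕ) < (Real.exp 1)^(3:ℕ) := by
      apply pow_lt_pow_left₀ h1 (by norm_num)
      norm_num
    calc (8:ℝ) < ((2.7182818283:ℝ))^(3:ℕ) := by norm_num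
      _ < (Real.exp 1)^(3:ℕ) := this
      _ = Real.exp 3 := by rw [← Real.exp_nat_mul]; norm_num
  have hlogA : Real.log A ≤ 4 * Real.log (d * u) := by
    have hA8 : A ≤ 8 * (d * u) := by nlinarith
    have h1 : Real.log A ≤ Real.log (8 * (d * u)) :=
      Real.log_le_log hA0 hA8
    have h2 : Real.log (8 * (d * u)) = Real.log 8 + Real.log (d * u) := by
      rw [Real.log_mul (by norm_num) (by positivity)]
    nlinarith
  have hA6 : 6 * A * Real.log A ≤ (s:ℝ) := by
    have h1 : 6 * A * Real.log A ≤ 6 * (8 * (d*u)) * (4 * Real.log (d*u)) := by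
      have hlogA0 : 0 ≤ Real.log A := by
        have := Real.log_pos (by linarith : (1:ℝ) < A); linarith
      have hA8 : A ≤ 8 * (d * u) := by nlinarith
      nlinarith
    calc 6 * A * Real.log A ≤ 192 * T2 := by rw [hT2def]; nlinarith
      _ ≤ 200 * T2 := by nlinarith
      _ ≤ (s:ℝ) := hsT2
  have hlogs : Real.log (s:ℝ) ≤ (s:ℝ) / A := loglem hA3 hA6
  have hkey : 2 * (ρ + 2) * Real.log (s:ℝ) ≤ ε * (s:ℝ) / 4 := by
    have h1 : Real.log (s:ℝ) * A ≤ (s:ℝ) := by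
      rw [← le_div_iff₀ hA0]; exact hlogs
    -- multiply by ε
    have h2 : Real.log (s:ℝ) * A * ε ≤ (s:ℝ) * ε := by
      exact mul_le_mul_of_nonneg_right h1 hε0.le
    have h3 : Real.log (s:ℝ) * A * ε = 8 * (ρ + 2) * Real.log (s:ℝ) := by
      rw [hAdef]
      calc Real.log (s:ℝ) * (8 * (ρ + 2) * u) * ε
          = 8 * (ρ + 2) * Real.log (s:ℝ) * (u * ε) := by ring
        _ = 8 * (ρ + 2) * Real.log (s:ℝ) := by rw [huε, mul_one]
    linarith
  -- gather log bounds
  have hlog2s : Real.log (2*(s:ℝ)) = Real.log 2 + Real.log (s:ℝ) :=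
    Real.log_mul (by norm_num) hs0.ne'
  have hlog2 : Real.log 2 ≤ Real.log (s:ℝ) := Real.log_le_log (by norm_num) (by linarith)
  have hlogs0 : 0 < Real.log (s:ℝ) := Real.log_pos (by linarith)
  have hlogr2s : Real.log (ρ + 2) ≤ Real.log (2*(s:ℝ)) :=
    Real.log_le_log (by linarith) (by linarith)
  have hlogδs : 200 * Real.log (1/δ) ≤ ε * (s:ℝ) := by
    have h0 := mul_le_mul_of_nonneg_right hsT1 hε0.le
    rw [hT1def] at h0
    have heq : 200 * (u * Real.log (1/δ)) * ε = 200 * Real.log (1/δ) * (u * ε) := by ring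
    rw [huε, mul_one] at heq
    rw [heq] at h0
    linarith
  have hmain : Real.log (ρ+2) + (ρ+1) * Real.log (2*(s:ℝ)) + Real.log (1/δ)
      ≤ ε * ((s:ℝ) - (ρ+1)) := by
    have he1 : (ρ+2) * Real.log (2*(s:ℝ)) - (ρ+1) * Real.log (2*(s:ℝ))
        = Real.log (2*(s:ℝ)) := by ring
    have h1 : Real.log (ρ+2) + (ρ+1) * Real.log (2*(s:ℝ)) ≤ (ρ+2) * Real.log (2*(s:ℝ)) := by
      linarith
    have hL2 : Real.log (2*(s:ℝ)) ≤ 2 * Real.log (s:ℝ) := by linarith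
    have h2' := mul_le_mul_of_nonneg_left hL2 (by linarith : (0:ℝ) ≤ ρ+2)
    have he2 : (ρ+2) * (2 * Real.log (s:ℝ)) = 2 * (ρ+2) * Real.log (s:ℝ) := by ring
    have h2 : (ρ+2) * Real.log (2*(s:ℝ)) ≤ 2 * (ρ+2) * Real.log (s:ℝ) := by
      rw [he2] at h2'; exact h2'
    have h3 : Real.log (1/δ) ≤ ε * (s:ℝ) / 4 := by linarith
    have h4 : ρ + 1 ≤ (s:ℝ)/2 := by linarith
    have h5 := mul_le_mul_of_nonneg_left h4 hε0.le
    have h6 : ε * ((s:ℝ) - (ρ+1)) = ε * (s:ℝ) - ε * (ρ+1) := by ring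
    have h7 : ε * ((s:ℝ)/2) = ε * (s:ℝ) / 2 := by ring
    rw [h7] at h5
    linarith
  -- now exponentials
  have hm : ((s - (r+1) : ℕ) : ℝ) = (s:ℝ) - (ρ+1) := by
    rw [Nat.cast_sub hrs]; push_cast [hρdef]; ring
  have hpow1 : (1-ε)^(s-(r+1)) ≤ Real.exp (-(ε * ((s:ℝ) - (ρ+1)))) := by
    have h1 : (1-ε) ≤ Real.exp (-ε) := by
      have := Real.add_one_le_exp (-ε); linarith
    calc (1-ε)^(s-(r+1)) ≤ (Real.exp (-ε))^(s-(r+1)) :=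
          pow_le_pow_left₀ (by linarith) h1 _
      _ = Real.exp (((s - (r+1) : ℕ):ℝ) * (-ε)) := by rw [← Real.exp_nat_mul]
      _ = Real.exp (-(ε * ((s:ℝ) - (ρ+1)))) := by rw [hm]; ring_nf
  have hpow2 : (2*(s:ℝ))^(r+1) = Real.exp ((ρ+1) * Real.log (2*(s:ℝ))) := by
    have : ((((r+1):ℕ)):ℝ) = ρ + 1 := by push_cast [hρdef]; ring
    rw [← this, Real.exp_nat_mul, Real.exp_log (by linarith)]
  have hρ2 : (ρ+2) = Real.exp (Real.log (ρ+2)) := (Real.exp_log (by linarith)).symm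
  have hδexp : Real.exp (Real.log δ) = δ := Real.exp_log hδ0
  have hlogδ' : Real.log (1/δ) = - Real.log δ := by
    rw [one_div, Real.log_inv]
  calc (ρ+2) * (2*(s:ℝ))^(r+1) * (1-ε)^(s-(r+1))
      ≤ (ρ+2) * (2*(s:ℝ))^(r+1) * Real.exp (-(ε * ((s:ℝ) - (ρ+1)))) := by
        apply mul_le_mul_of_nonneg_left hpow1 (by positivity)
    _ = Real.exp (Real.log (ρ+2) + (ρ+1) * Real.log (2*(s:ℝ)) + (-(ε * ((s:ℝ) - (ρ+1))))) := by
        rw [hpow2]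
        conv_lhs => rw [hρ2]
        rw [← Real.exp_add, ← Real.exp_add]
    _ ≤ Real.exp (Real.log δ) := by
        apply Real.exp_le_exp.mpr
        rw [hlogδ'] at hmain
        linarith
    _ = δ := hδexp




end RDGaux

noncomputable section RDGmain

open Finset

private def avec {n r : ℕ} (R : Matrix (Fin r) (Fin n) ℝ) (i : Fin n) :
    EuclideanSpace ℝ (Fin r) :=
  WithLp.toLp 2 (fun k => R k i)

private lemma inner_avec {n r : ℕ} (R : Matrix (Fin r) (Fin n) ℝ) (i : Fin n)
    (v : EuclideanSpace ℝ (Fin r)) : inner ℝ (avec R i) v = ∑ k, v k * R k i := by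
  rw [PiLp.inner_apply]
  simp only [avec, PiLp.toLp_apply, RCLike.inner_apply, conj_trivial]

private def gvec {n r : ℕ} (R : Matrix (Fin r) (Fin n) ℝ) (i : Fin n) (b : Bool) :
    EuclideanSpace ℝ (Fin r) :=
  if b then avec R i else -(avec R i)

private def cval {n : ℕ} (x : Fin n → ℝ) (Δ : ℝ) (i : Fin n) (b : Bool) : ℝ :=
  if b then x i + Δ else Δ - x i

private lemma mem_HSp_iff {n r : ℕ} (R : Matrix (Fin r) (Fin n) ℝ) (x : Fin n → ℝ) (Δ : ℝ)
    (i : Fin n) (v : EuclideanSpace ℝ (Fin r)) :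
    (∀ b : Bool, v ∈ HSp (gvec R i b) (cval x Δ i b)) ↔ |x i - ∑ k, v k * R k i| ≤ Δ := by
  have h1 : v ∈ HSp (gvec R i true) (cval x Δ i true) ↔ (∑ k, v k * R k i) ≤ x i + Δ := by
    simp only [HSp, gvec, cval, if_true, Set.mem_setOf_eq, inner_avec]
  have h2 : v ∈ HSp (gvec R i false) (cval x Δ i false) ↔ -(∑ k, v k * R k i) ≤ Δ - x i := by
    simp only [HSp, gvec, cval, Bool.false_eq_true, if_false, Set.mem_setOf_eq,
      inner_neg_left, inner_avec]
  constructor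
  · intro h
    rw [abs_le]
    have := h1.mp (h true)
    have := h2.mp (h false)
    constructor <;> linarith
  · intro h b
    rw [abs_le] at h
    cases b
    · rw [h2]; linarith [h.2]
    · rw [h1]; linarith [h.1]

private noncomputable def PTpt {n r s : ℕ} (R : Matrix (Fin r) (Fin n) ℝ) (x : Fin n → ℝ)
    (Δ : ℝ) (B : Finset (Fin s × Bool)) (ω : Fin s → Fin n) : EuclideanSpace ℝ (Fin r) :=
  mnp (⋂ q ∈ B, HSp (gvec R (ω q.1) q.2) (cval x Δ (ω q.1) q.2))

private lemma PTpt_dep {n r s : ℕ} (R : Matrix (Fin r) (Fin n) ℝ) (x : Fin n → ℝ) (Δ : ℝ)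
    (B : Finset (Fin s × Bool)) (ω ω' : Fin s → Fin n)
    (h : ∀ j ∈ B.image Prod.fst, ω j = ω' j) : PTpt R x Δ B ω = PTpt R x Δ B ω' := by
  have hset : (⋂ q ∈ B, HSp (gvec R (ω q.1) q.2) (cval x Δ (ω q.1) q.2)) =
      (⋂ q ∈ B, HSp (gvec R (ω' q.1) q.2) (cval x Δ (ω' q.1) q.2)) := by
    apply Set.iInter_congr
    intro q
    apply Set.iInter_congr
    intro hq
    rw [h q.1 (Finset.mem_image_of_mem _ hq)]
  rw [PTpt, PTpt, hset]

private lemma reduction {n r s : ℕ} (R : Matrix (Fin r) (Fin n) ℝ) (x : Fin n → ℝ) (Δ : ℝ)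
    (ω : Fin s → Fin n)
    (hfeas : ∃ v : Fin r → ℝ, ∀ j : Fin s, |x (ω j) - ∑ k, v k * R k (ω j)| ≤ Δ) :
    ∃ B : Finset (Fin s × Bool), B.card ≤ r + 1 ∧
      ∀ j : Fin s, |x (ω j) - ∑ k, (PTpt R x Δ B ω) k * R k (ω j)| ≤ Δ := by
  obtain ⟨v, hv⟩ := hfeas
  have hne : (⋂ q ∈ (Finset.univ : Finset (Fin s × Bool)),
      HSp (gvec R (ω q.1) q.2) (cval x Δ (ω q.1) q.2)).Nonempty := by
    refine ⟨WithLp.toLp 2 v, Set.mem_iInter₂.mpr fun q _ => ?_⟩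
    exact (mem_HSp_iff R x Δ (ω q.1) (WithLp.toLp 2 v)).mpr (hv q.1) q.2
  obtain ⟨B, _, hBcard, hBeq⟩ := basis_exists (fun q : Fin s × Bool => gvec R (ω q.1) q.2)
    (fun q : Fin s × Bool => cval x Δ (ω q.1) q.2) Finset.univ hne
  have hp : IsMNP _ (mnp (⋂ q ∈ (Finset.univ : Finset (Fin s × Bool)),
      HSp (gvec R (ω q.1) q.2) (cval x Δ (ω q.1) q.2))) :=
    mnp_spec (exists_mnp hne (biInter_HSp_closed _ _ _))
  refine ⟨B, hBcard, fun j => ?_⟩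
  have hmem : PTpt R x Δ B ω ∈ ⋂ q ∈ (Finset.univ : Finset (Fin s × Bool)),
      HSp (gvec R (ω q.1) q.2) (cval x Δ (ω q.1) q.2) := by
    rw [PTpt, hBeq]
    exact hp.1
  exact (mem_HSp_iff R x Δ (ω j) (PTpt R x Δ B ω)).mp
    (fun b => Set.mem_iInter₂.mp hmem (j, b) (Finset.mem_univ _))

end RDGmain

set_option maxHeartbeats 1000000 in
theorem randomized_detection_guarantee :
    ∃ C : ℝ, 0 < C ∧
      ∀ (n r : ℕ), 1 ≤ n → 1 ≤ r →
      ∀ (R : Matrix (Fin r) (Fin n) ℝ) (x : Fin n → ℝ) (Δ : ℝ), 0 ≤ Δ →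
      ∀ ε δ : ℝ, ε ∈ Set.Ioo (0 : ℝ) 1 → δ ∈ Set.Ioo (0 : ℝ) 1 →
      (∀ c : Fin r → ℝ, ε * n ≤
        ((Finset.univ.filter
          (fun i : Fin n => Δ < |x i - ∑ k, c k * R k i|)).card : ℝ)) →
      ∀ s : ℕ,
        C * ((1 / ε) * Real.log (1 / δ) +
              (((r : ℝ) + 2) * Real.log ((r : ℝ) + 2) / ε) *
                Real.log (((r : ℝ) + 2) * Real.log ((r : ℝ) + 2) / ε)) ≤ (s : ℝ) →
        (1 - δ : ℝ) ≤
          ((Finset.univ.filter (fun ω : Fin s → Fin n =>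
            ¬ ∃ v : Fin r → ℝ, ∀ j : Fin s, |x (ω j) - ∑ k, v k * R k (ω j)| ≤ Δ)).card : ℝ)
          / (n : ℝ) ^ s := by
  refine ⟨200, by norm_num, ?_⟩
  intro n r hn hr R x Δ hΔ ε δ hε hδ hyp s hs
  obtain ⟨hrs, harith⟩ := final_arith r s hr hε hδ hs
  have hε0 := hε.1
  have hε1 := hε.2
  have hδ0 := hδ.1
  have hn0 : (0:ℝ) < (n:ℝ) := by exact_mod_cast hn
  have hns : (0:ℝ) < (n:ℝ)^s := by positivity
  set GG : Finset (Fin s × Bool) → (Fin s → Fin n) → Finset (Fin n) :=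
    fun B ω => Finset.univ.filter
      (fun i : Fin n => ¬ (Δ < |x i - ∑ k, (PTpt R x Δ B ω) k * R k i|)) with hGG
  have hGGcard : ∀ B ω, ((GG B ω).card : ℝ) ≤ (1 - ε) * n := by
    intro B ω
    have h1 : ((Finset.univ.filter
        (fun i : Fin n => Δ < |x i - ∑ k, (PTpt R x Δ B ω) k * R k i|)).card)
        + (GG B ω).card = n := by
      have h := Finset.card_filter_add_card_filter_not
        (s := (Finset.univ : Finset (Fin n)))
        (p := fun i : Fin n => Δ < |x i - ∑ k, (PTpt R x Δ B ω) k * R k i|)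
      rw [Finset.card_univ, Fintype.card_fin] at h
      exact h
    have h2 := hyp (PTpt R x Δ B ω)
    have h1' : ((Finset.univ.filter
        (fun i : Fin n => Δ < |x i - ∑ k, (PTpt R x Δ B ω) k * R k i|)).card : ℝ)
        + ((GG B ω).card : ℝ) = (n : ℝ) := by exact_mod_cast h1
    nlinarith [h2, h1']
  -- the family of possible bases
  set 𝓑 : Finset (Finset (Fin s × Bool)) :=
    Finset.univ.filter (fun B : Finset (Fin s × Bool) => B.card ≤ r+1) with h𝓑
  -- feasible outcomes
  set Feas : Finset (Fin s → Fin n) := Finset.univ.filter (fun ω : Fin s → Fin n =>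
    ∃ v : Fin r → ℝ, ∀ j : Fin s, |x (ω j) - ∑ k, v k * R k (ω j)| ≤ Δ) with hFeasDef
  have hsubset : Feas ⊆ 𝓑.biUnion (fun B => Finset.univ.filter
      (fun ω : Fin s → Fin n => ∀ j ∉ B.image Prod.fst, ω j ∈ GG B ω)) := by
    intro ω hω
    rw [hFeasDef, Finset.mem_filter] at hω
    obtain ⟨B, hBc, hBsat⟩ := reduction R x Δ ω hω.2
    refine Finset.mem_biUnion.mpr ⟨B, ?_, ?_⟩
    · rw [h𝓑, Finset.mem_filter]; exact ⟨Finset.mem_univ _, hBc⟩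
    · rw [Finset.mem_filter]
      refine ⟨Finset.mem_univ _, fun j _ => ?_⟩
      rw [hGG, Finset.mem_filter]
      exact ⟨Finset.mem_univ _, not_lt.mpr (hBsat j)⟩
  have hcount : ∀ B ∈ 𝓑, ((Finset.univ.filter
      (fun ω : Fin s → Fin n => ∀ j ∉ B.image Prod.fst, ω j ∈ GG B ω)).card : ℝ) ≤
      (1-ε)^(s-(r+1)) * (n:ℝ)^s := by
    intro B hB
    have hdep : ∀ ω ω' : Fin s → Fin n, (∀ j ∈ B.image Prod.fst, ω j = ω' j) →
        GG B ω = GG B ω' := by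
      intro ω ω' h
      rw [hGG]
      simp only
      rw [PTpt_dep R x Δ B ω ω' h]
    have hM : ∀ ω, ((GG B ω).card : ℝ) ≤ (1-ε) * n := hGGcard B
    have hcr := count_restrict hn (B.image Prod.fst) (GG B) hdep ((1-ε)*(n:ℝ)) hM
    set t : ℕ := (B.image Prod.fst).card with ht
    have ht1 : t ≤ r + 1 := by
      rw [ht]
      refine le_trans (Finset.card_image_le) ?_
      rw [h𝓑, Finset.mem_filter] at hB
      exact hB.2
    have hts : t ≤ s := by
      rw [ht]
      exact le_trans (Finset.card_le_univ _) (by simp)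
    refine le_trans hcr ?_
    have hsplit : (n:ℝ)^t * ((1-ε)*(n:ℝ))^(s-t) = (1-ε)^(s-t) * (n:ℝ)^s := by
      rw [mul_pow, ← mul_assoc, mul_comm ((n:ℝ)^t), mul_assoc, ← pow_add]
      congr 2
      omega
    rw [hsplit]
    apply mul_le_mul_of_nonneg_right _ (le_of_lt hns)
    apply pow_le_pow_of_le_one (by linarith) (by linarith)
    omega
  have h𝓑card : ((𝓑.card : ℝ)) ≤ ((r:ℝ)+2) * (2*(s:ℝ))^(r+1) := by
    have hsub2 : 𝓑 ⊆ (Finset.range (r+2)).biUnion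
        (fun k => Finset.powersetCard k (Finset.univ : Finset (Fin s × Bool))) := by
      intro B hB
      rw [h𝓑, Finset.mem_filter] at hB
      refine Finset.mem_biUnion.mpr ⟨B.card, Finset.mem_range.mpr (by omega), ?_⟩
      exact Finset.mem_powersetCard.mpr ⟨Finset.subset_univ _, rfl⟩
    have hb1 : 𝓑.card ≤ (r+2) * (s*2)^(r+1) := by
      refine le_trans (Finset.card_le_card hsub2) ?_
      refine le_trans Finset.card_biUnion_le ?_
      have hone : ∀ k ∈ Finset.range (r+2),
          (Finset.powersetCard k (Finset.univ : Finset (Fin s × Bool))).card ≤ (s*2)^(r+1) := by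
        intro k hk
        rw [Finset.card_powersetCard, Finset.card_univ, Fintype.card_prod, Fintype.card_fin,
          Fintype.card_bool]
        refine le_trans (Nat.choose_le_pow _ _) ?_
        refine Nat.pow_le_pow_right (by omega) ?_
        rw [Finset.mem_range] at hk
        omega
      refine le_trans (Finset.sum_le_sum hone) ?_
      rw [Finset.sum_const, Finset.card_range, smul_eq_mul]
    calc ((𝓑.card : ℝ)) ≤ (((r+2) * (s*2)^(r+1) : ℕ) : ℝ) := by exact_mod_cast hb1
      _ = ((r:ℝ)+2) * (2*(s:ℝ))^(r+1) := by push_cast; ring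
  have hFcard : (Feas.card : ℝ) ≤ δ * (n:ℝ)^s := by
    calc (Feas.card : ℝ)
        ≤ ((𝓑.biUnion (fun B => Finset.univ.filter
            (fun ω : Fin s → Fin n => ∀ j ∉ B.image Prod.fst, ω j ∈ GG B ω))).card : ℝ) := by
          exact_mod_cast Finset.card_le_card hsubset
      _ ≤ ∑ B ∈ 𝓑, ((Finset.univ.filter
            (fun ω : Fin s → Fin n => ∀ j ∉ B.image Prod.fst, ω j ∈ GG B ω)).card : ℝ) := by
          exact_mod_cast Finset.card_biUnion_le
      _ ≤ ∑ _B ∈ 𝓑, (1-ε)^(s-(r+1)) * (n:ℝ)^s := Finset.sum_le_sum hcount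
      _ = (𝓑.card : ℝ) * ((1-ε)^(s-(r+1)) * (n:ℝ)^s) := by
          rw [Finset.sum_const, nsmul_eq_mul]
      _ ≤ (((r:ℝ)+2) * (2*(s:ℝ))^(r+1)) * ((1-ε)^(s-(r+1)) * (n:ℝ)^s) := by
          exact mul_le_mul_of_nonneg_right h𝓑card
            (mul_nonneg (pow_nonneg (by linarith) _) hns.le)
      _ = (((r:ℝ)+2) * (2*(s:ℝ))^(r+1) * (1-ε)^(s-(r+1))) * (n:ℝ)^s := by ring
      _ ≤ δ * (n:ℝ)^s := by
          apply mul_le_mul_of_nonneg_right harith (le_of_lt hns)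
  have htotal : (Feas.card : ℝ) +
      ((Finset.univ.filter (fun ω : Fin s → Fin n =>
        ¬ ∃ v : Fin r → ℝ, ∀ j : Fin s, |x (ω j) - ∑ k, v k * R k (ω j)| ≤ Δ)).card : ℝ)
      = (n:ℝ)^s := by
    have h := Finset.card_filter_add_card_filter_not
      (s := (Finset.univ : Finset (Fin s → Fin n)))
      (p := fun ω : Fin s → Fin n =>
        ∃ v : Fin r → ℝ, ∀ j : Fin s, |x (ω j) - ∑ k, v k * R k (ω j)| ≤ Δ)
    rw [Finset.card_univ, Fintype.card_fun, Fintype.card_fin, Fintype.card_fin] at h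
    have h' : Feas.card +
        ((Finset.univ.filter (fun ω : Fin s → Fin n =>
          ¬ ∃ v : Fin r → ℝ, ∀ j : Fin s, |x (ω j) - ∑ k, v k * R k (ω j)| ≤ Δ)).card) =
        n ^ s := h
    exact_mod_cast h'
  rw [le_div_iff₀ hns]
  linarith
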